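/- Let (X, dist) be a metric space, μ a Borel probability measure on X, s ∈ X, and d ≥ 1 a real number. Assume μ(B(s,1)) = 1 and the doubling condition at s: for every r > 0 and every ε ∈ (0,1], μ(B(s,r)) ≤ (1/ε)^d · μ(B(s, ε·r)). Let m be a positive integer, let X₁, …, X_m be independent samples from μ, and let M = min_{1 ≤ j ≤ m} dist(s, X_j). Then Σ_{i=0}^{∞} 2^(−i) · P(2^(−(i+1)) < M ≤ 2^(−i)) ≤ Σ_{i=0}^{∞} 2^(−i) · ((1 − 2^(−(i+1)·d))^m − (1 − 2^(−i·d))^m). -/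
import Mathlib


open MeasureTheory Metric Real

/-- Lemma 1: Under the doubling condition with exponent `d ≥ 1` at `s`
and `μ (ball s 1) = 1`, with `M = min_{1 ≤ j ≤ m} dist(s, X_j)` for `m` i.i.d. samples,
`∑_{i=0}^∞ 2^(-i) * P(2^(-(i+1)) < M ≤ 2^(-i))
  ≤ ∑_{i=0}^∞ 2^(-i) * ((1 - 2^(-(i+1)d))^m - (1 - 2^(-i d))^m)`. -/
theorem dyadic_sum_min_dist_le {X : Type*} [MetricSpace X] [MeasurableSpace X] [BorelSpace X]
    (μ : Measure X) [IsProbabilityMeasure μ] (s : X) (d : ℝ) (hd : 1 ≤ d)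
    (h1 : μ (ball s 1) = 1)
    (hdbl : ∀ r : ℝ, 0 < r → ∀ ε : ℝ, 0 < ε → ε ≤ 1 →
      μ (ball s r) ≤ ENNReal.ofReal ((1 / ε) ^ d) * μ (ball s (ε * r)))
    (m : ℕ) (hm : 0 < m) :
    (∑' i : ℕ, (2 : ℝ) ^ (-(i : ℝ)) *
        ((Measure.pi fun _ : Fin m => μ)
          {x : Fin m → X |
            (2 : ℝ) ^ (-((i : ℝ) + 1)) < (⨅ j : Fin m, dist s (x j)) ∧
              (⨅ j : Fin m, dist s (x j)) ≤ (2 : ℝ) ^ (-(i : ℝ))}).toReal)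
      ≤ ∑' i : ℕ, (2 : ℝ) ^ (-(i : ℝ)) *
          ((1 - (2 : ℝ) ^ (-((i : ℝ) + 1) * d)) ^ m -
            (1 - (2 : ℝ) ^ (-(i : ℝ) * d)) ^ m) := by
  haveI : Nonempty (Fin m) := ⟨⟨0, hm⟩⟩
  set ν : Measure (Fin m → X) := Measure.pi fun _ : Fin m => μ with hν
  -- the event sets at threshold a
  have hsetA : ∀ a : ℝ, {x : Fin m → X | a < ⨅ j : Fin m, dist s (x j)} =
      Set.pi Set.univ (fun _ : Fin m => (closedBall s a)ᶜ) := by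
    intro a
    ext x
    simp only [Set.mem_setOf_eq, Set.mem_pi, Set.mem_univ, forall_true_left,
      Set.mem_compl_iff, mem_closedBall, not_le]
    constructor
    · intro h j
      have hb : BddBelow (Set.range fun j : Fin m => dist s (x j)) :=
        ⟨0, by rintro _ ⟨j, rfl⟩; exact dist_nonneg⟩
      have := ciInf_le hb j
      rw [dist_comm]
      linarith
    · intro h
      obtain ⟨j0, hj0⟩ := exists_eq_ciInf_of_finite (f := fun j : Fin m => dist s (x j))
      rw [← hj0, dist_comm]
      exact h j0
  have keyA : ∀ a : ℝ, ν {x : Fin m → X | a < ⨅ j : Fin m, dist s (x j)} =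
      (μ ((closedBall s a)ᶜ)) ^ m := by
    intro a
    rw [hsetA a, hν, Measure.pi_pi]
    simp [Finset.prod_const]
  -- real-valued quantities
  set c : ℕ → ℝ := fun i => (μ (closedBall s ((2:ℝ) ^ (-(i:ℝ))))).toReal with hc
  set f : ℕ → ℝ := fun i => (1 - c i) ^ m with hf
  set g : ℕ → ℝ := fun i => (1 - (2:ℝ) ^ (-(i:ℝ) * d)) ^ m with hg
  have hc01 : ∀ i, 0 ≤ c i ∧ c i ≤ 1 := by
    intro i
    refine ⟨ENNReal.toReal_nonneg, ?_⟩
    have := prob_le_one (μ := μ) (s := closedBall s ((2:ℝ) ^ (-(i:ℝ))))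
    simpa [hc] using ENNReal.toReal_mono ENNReal.one_ne_top this
  have hcompl : ∀ i : ℕ,
      (μ ((closedBall s ((2:ℝ) ^ (-(i:ℝ))))ᶜ)).toReal = 1 - c i := by
    intro i
    rw [measure_compl measurableSet_closedBall (measure_ne_top μ _), measure_univ,
      ENNReal.toReal_sub_of_le prob_le_one ENNReal.one_ne_top]
    simp [hc]
  -- measure of complement powers, in toReal
  have hpow : ∀ i : ℕ,
      ((μ ((closedBall s ((2:ℝ) ^ (-(i:ℝ))))ᶜ)) ^ m).toReal = f i := by
    intro i
    rw [ENNReal.toReal_pow, hcompl i, hf]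
  -- radii are antitone
  have hrad : ∀ i : ℕ, (2:ℝ) ^ (-(((i:ℕ)+1 : ℕ):ℝ)) ≤ (2:ℝ) ^ (-(i:ℝ)) := by
    intro i
    apply Real.rpow_le_rpow_of_exponent_le (by norm_num)
    push_cast; linarith
  -- the event measure in terms of f
  have hEvent : ∀ i : ℕ,
      (ν {x : Fin m → X |
          (2 : ℝ) ^ (-((i : ℝ) + 1)) < (⨅ j : Fin m, dist s (x j)) ∧
            (⨅ j : Fin m, dist s (x j)) ≤ (2 : ℝ) ^ (-(i : ℝ))}).toReal
        = f (i+1) - f i := by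
    intro i
    have hcast : (-((i : ℝ) + 1)) = (-(((i+1 : ℕ)):ℝ)) := by push_cast; ring
    set a : ℝ := (2:ℝ) ^ (-(((i+1:ℕ)):ℝ)) with ha
    set b : ℝ := (2:ℝ) ^ (-(i:ℝ)) with hb
    have hab : a ≤ b := hrad i
    have hsetE : {x : Fin m → X |
          (2 : ℝ) ^ (-((i : ℝ) + 1)) < (⨅ j : Fin m, dist s (x j)) ∧
            (⨅ j : Fin m, dist s (x j)) ≤ (2 : ℝ) ^ (-(i : ℝ))}
        = {x : Fin m → X | a < ⨅ j : Fin m, dist s (x j)} \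
          {x : Fin m → X | b < ⨅ j : Fin m, dist s (x j)} := by
      ext x
      simp only [Set.mem_setOf_eq, Set.mem_diff, hcast, not_lt, ha, hb]
    have hsub : {x : Fin m → X | b < ⨅ j : Fin m, dist s (x j)} ⊆
        {x : Fin m → X | a < ⨅ j : Fin m, dist s (x j)} := by
      intro x hx
      exact lt_of_le_of_lt hab hx
    have hmeasB : MeasurableSet {x : Fin m → X | b < ⨅ j : Fin m, dist s (x j)} := by
      rw [hsetA b]
      exact MeasurableSet.univ_pi fun _ => measurableSet_closedBall.compl
    have hdiff : ν ({x : Fin m → X | a < ⨅ j : Fin m, dist s (x j)} \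
          {x : Fin m → X | b < ⨅ j : Fin m, dist s (x j)})
        = ν {x : Fin m → X | a < ⨅ j : Fin m, dist s (x j)}
          - ν {x : Fin m → X | b < ⨅ j : Fin m, dist s (x j)} :=
      measure_diff hsub hmeasB.nullMeasurableSet (measure_ne_top ν _)
    have hle : ν {x : Fin m → X | b < ⨅ j : Fin m, dist s (x j)} ≤
        ν {x : Fin m → X | a < ⨅ j : Fin m, dist s (x j)} := measure_mono hsub
    rw [hsetE, hdiff, ENNReal.toReal_sub_of_le hle (measure_ne_top ν _), keyA, keyA,
      hpow, hpow]
  -- lower bound on c : c i ≥ 2 ^ (-i*d)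
  have hcge : ∀ i : ℕ, (2:ℝ) ^ (-(i:ℝ) * d) ≤ c i := by
    intro i
    have hε : (0:ℝ) < (2:ℝ) ^ (-(i:ℝ)) := Real.rpow_pos_of_pos (by norm_num) _
    have hε1 : (2:ℝ) ^ (-(i:ℝ)) ≤ 1 :=
      Real.rpow_le_one_of_one_le_of_nonpos (by norm_num)
        (neg_nonpos.mpr (Nat.cast_nonneg i))
    have hdo := hdbl 1 one_pos _ hε hε1
    rw [mul_one, h1] at hdo
    have hinv : (1 / (2:ℝ) ^ (-(i:ℝ))) ^ d = (2:ℝ) ^ ((i:ℝ) * d) := by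
      rw [one_div, ← Real.rpow_neg (by norm_num : (0:ℝ) ≤ 2), neg_neg,
        ← Real.rpow_mul (by norm_num : (0:ℝ) ≤ 2)]
    rw [hinv] at hdo
    have hmul : ENNReal.ofReal ((2:ℝ) ^ (-(i:ℝ) * d)) *
        ENNReal.ofReal ((2:ℝ) ^ ((i:ℝ) * d)) = 1 := by
      rw [← ENNReal.ofReal_mul (by positivity),
        ← Real.rpow_add (by norm_num : (0:ℝ) < 2)]
      norm_num
    have hball : ENNReal.ofReal ((2:ℝ) ^ (-(i:ℝ) * d)) ≤ μ (ball s ((2:ℝ) ^ (-(i:ℝ)))) := by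
      calc ENNReal.ofReal ((2:ℝ) ^ (-(i:ℝ) * d))
          = ENNReal.ofReal ((2:ℝ) ^ (-(i:ℝ) * d)) * 1 := (mul_one _).symm
        _ ≤ ENNReal.ofReal ((2:ℝ) ^ (-(i:ℝ) * d)) *
            (ENNReal.ofReal ((2:ℝ) ^ ((i:ℝ) * d)) * μ (ball s ((2:ℝ) ^ (-(i:ℝ))))) :=
            mul_le_mul_right hdo _
        _ = μ (ball s ((2:ℝ) ^ (-(i:ℝ)))) := by rw [← mul_assoc, hmul, one_mul]
    have hcb : ENNReal.ofReal ((2:ℝ) ^ (-(i:ℝ) * d)) ≤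
        μ (closedBall s ((2:ℝ) ^ (-(i:ℝ)))) :=
      hball.trans (measure_mono ball_subset_closedBall)
    have := ENNReal.toReal_mono (measure_ne_top μ _) hcb
    rwa [ENNReal.toReal_ofReal (by positivity)] at this
  -- bounds on the 2^(-i d) quantities
  have hgd : ∀ i : ℕ, 0 < (2:ℝ) ^ (-(i:ℝ) * d) ∧ (2:ℝ) ^ (-(i:ℝ) * d) ≤ 1 := by
    intro i
    refine ⟨Real.rpow_pos_of_pos (by norm_num) _, ?_⟩
    apply Real.rpow_le_one_of_one_le_of_nonpos (by norm_num)
    have : (0:ℝ) ≤ (i:ℝ) * d := by positivity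
    linarith
  have hf01 : ∀ i, 0 ≤ f i ∧ f i ≤ 1 := by
    intro i
    obtain ⟨h0, h1'⟩ := hc01 i
    constructor
    · exact pow_nonneg (by linarith) m
    · exact pow_le_one₀ (by linarith) (by linarith)
  have hg01 : ∀ i, 0 ≤ g i ∧ g i ≤ 1 := by
    intro i
    obtain ⟨h0, h1'⟩ := hgd i
    constructor
    · exact pow_nonneg (by linarith) m
    · exact pow_le_one₀ (by linarith) (by linarith)
  have hfg : ∀ i, f i ≤ g i := by
    intro i
    obtain ⟨h0, h1'⟩ := hc01 i
    apply pow_le_pow_left₀ (by linarith)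
    have := hcge i
    linarith
  have hg0 : g 0 = 0 := by
    simp only [hg, Nat.cast_zero, neg_zero, zero_mul, Real.rpow_zero, sub_self]
    exact zero_pow hm.ne'
  -- rewrite weights as geometric
  have hw : ∀ i : ℕ, (2:ℝ) ^ (-(i:ℝ)) = (1/2 : ℝ) ^ i := by
    intro i
    rw [Real.rpow_neg (by norm_num : (0:ℝ) ≤ 2), Real.rpow_natCast]
    simp [one_div, inv_pow]
  -- summability helper
  have hsum : ∀ h : ℕ → ℝ, (∀ i, |h i| ≤ 1) → Summable (fun i => (1/2:ℝ) ^ i * h i) := by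
    intro h hb
    apply Summable.of_abs
    apply Summable.of_nonneg_of_le (fun i => abs_nonneg _) (fun i => ?_)
      (summable_geometric_of_lt_one (by norm_num) (by norm_num : (1/2:ℝ) < 1))
    rw [abs_mul, abs_of_nonneg (by positivity : (0:ℝ) ≤ (1/2:ℝ)^i)]
    calc (1/2:ℝ)^i * |h i| ≤ (1/2:ℝ)^i * 1 := by
          apply mul_le_mul_of_nonneg_left (hb i) (by positivity)
      _ = (1/2:ℝ)^i := mul_one _
  have habs : ∀ h : ℕ → ℝ, (∀ i, 0 ≤ h i ∧ h i ≤ 1) → ∀ i, |h i| ≤ 1 := by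
    intro h hb i
    rw [abs_of_nonneg (hb i).1]; exact (hb i).2
  have hsf : Summable (fun i => (1/2:ℝ) ^ i * f i) := hsum f (habs f hf01)
  have hsg : Summable (fun i => (1/2:ℝ) ^ i * g i) := hsum g (habs g hg01)
  have hsf' : Summable (fun i => (1/2:ℝ) ^ i * f (i+1)) := hsum _ (habs _ fun i => hf01 (i+1))
  have hsg' : Summable (fun i => (1/2:ℝ) ^ i * g (i+1)) := hsum _ (habs _ fun i => hg01 (i+1))
  -- the shifted sum identity
  have hshift : ∀ h : ℕ → ℝ, Summable (fun i => (1/2:ℝ) ^ i * h i) →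
      (∑' i : ℕ, (1/2:ℝ) ^ i * h (i+1)) = 2 * (∑' i : ℕ, (1/2:ℝ) ^ i * h i) - 2 * h 0 := by
    intro h hs
    have h2 : ∀ i : ℕ, (1/2:ℝ) ^ i * h (i+1) = 2 * ((1/2:ℝ) ^ (i+1) * h (i+1)) := by
      intro i; rw [pow_succ]; ring
    rw [tsum_congr h2, tsum_mul_left]
    have := (Summable.tsum_eq_zero_add hs)
    rw [this]
    ring
  -- compute both sides
  have hLHS : (∑' i : ℕ, (2 : ℝ) ^ (-(i : ℝ)) *
        (ν {x : Fin m → X |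
            (2 : ℝ) ^ (-((i : ℝ) + 1)) < (⨅ j : Fin m, dist s (x j)) ∧
              (⨅ j : Fin m, dist s (x j)) ≤ (2 : ℝ) ^ (-(i : ℝ))}).toReal)
      = (∑' i : ℕ, (1/2:ℝ) ^ i * f (i+1)) - (∑' i : ℕ, (1/2:ℝ) ^ i * f i) := by
    rw [← Summable.tsum_sub hsf' hsf]
    apply tsum_congr
    intro i
    rw [hEvent i, hw i]
    ring
  have hRHS : (∑' i : ℕ, (2 : ℝ) ^ (-(i : ℝ)) *
          ((1 - (2 : ℝ) ^ (-((i : ℝ) + 1) * d)) ^ m -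
            (1 - (2 : ℝ) ^ (-(i : ℝ) * d)) ^ m))
      = (∑' i : ℕ, (1/2:ℝ) ^ i * g (i+1)) - (∑' i : ℕ, (1/2:ℝ) ^ i * g i) := by
    rw [← Summable.tsum_sub hsg' hsg]
    apply tsum_congr
    intro i
    have hcast : (-((i : ℝ) + 1) * d) = (-(((i+1:ℕ)):ℝ) * d) := by push_cast; ring
    rw [hw i, hcast]
    simp only [hg]
    ring
  rw [hLHS, hRHS, hshift f hsf, hshift g hsg]
  have hSfg : (∑' i : ℕ, (1/2:ℝ) ^ i * f i) ≤ (∑' i : ℕ, (1/2:ℝ) ^ i * g i) := by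
    apply Summable.tsum_le_tsum _ hsf hsg
    intro i
    exact mul_le_mul_of_nonneg_left (hfg i) (by positivity)
  have hf0 : 0 ≤ f 0 := (hf01 0).1
  rw [hg0]
  linarith
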